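/- For a conformal Euclidean tetrahedron with tangent ball radii $r_i, r_j, r_k, r_l > 0$ where $r_i$ is minimal, the quantity $\frac{1}{r_i}\left(\frac{1}{r_j}+\frac{1}{r_k}+\frac{1}{r_l}\right)+\frac{1}{r_j}\left(\frac{1}{r_i}+\frac{1}{r_k}+\frac{1}{r_l}\right)-\left(\frac{1}{r_k}-\frac{1}{r_l}\right)^2$ is strictly positive. -/
import Mathlib


theorem stmt17 (ri rj rk rl : ℝ) (hi : 0 < ri) (hj : 0 < rj) (hk : 0 < rk) (hl : 0 < rl)
    (hmin : ri ≤ rj ∧ ri ≤ rk ∧ ri ≤ rl) :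
    0 < 1 / ri * (1 / rj + 1 / rk + 1 / rl) + 1 / rj * (1 / ri + 1 / rk + 1 / rl)
      - (1 / rk - 1 / rl) ^ 2 := by
  obtain ⟨h1, h2, h3⟩ := hmin
  have hk2 : (1:ℝ)/rk ≤ 1/ri := one_div_le_one_div_of_le hi h2
  have hl2 : (1:ℝ)/rl ≤ 1/ri := one_div_le_one_div_of_le hi h3
  have pk : (0:ℝ) < 1/rk := by positivity
  have pl : (0:ℝ) < 1/rl := by positivity
  have pi' : (0:ℝ) < 1/ri := by positivity
  have pj : (0:ℝ) < 1/rj := by positivity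
  nlinarith [mul_le_mul_of_nonneg_left hk2 pk.le, mul_le_mul_of_nonneg_left hl2 pl.le,
    mul_pos pi' pj, mul_pos pj pk, mul_pos pj pl, mul_pos pk pl]
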